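/- Let ξ ∈ ℝ and c > 0, and define φ̄: ℝ → ℝ by φ̄(x) = (x−ξ)|x−ξ| φ((x−ξ)/c). Then φ̄ is twice differentiable at every point x ≠ ξ, the second derivative satisfies |φ̄''(x)| ≤ 50 for all x ≠ ξ and φ̄''(x) = 0 for |x−ξ| > c, and the one-sided limits of φ̄'' at ξ exist with lim_{x→ξ+} φ̄''(x) = 2 and lim_{x→ξ−} φ̄''(x) = −2. -/

import Mathlib

open Filter

/-- The bump function `φ(u) = (1+u)³(1-u)³` for `|u| ≤ 1` and `φ(u) = 0` otherwise. -/
noncomputable def phi (u : ℝ) : ℝ := if |u| ≤ 1 then (1 + u) ^ 3 * (1 - u) ^ 3 else 0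

/-- `φ̄(x) = (x-ξ)|x-ξ| φ((x-ξ)/c)`. -/
noncomputable def phibar (ξ c : ℝ) (x : ℝ) : ℝ := (x - ξ) * |x - ξ| * phi ((x - ξ) / c)

section Aux

lemma hasDerivAt_mul_abs' (x : ℝ) : HasDerivAt (fun y : ℝ => y * |y|) (2 * |x|) x := by
  rcases lt_trichotomy x 0 with hx | hx | hx
  · have h : (fun y : ℝ => y * |y|) =ᶠ[nhds x] fun y => -(y * y) := by
      filter_upwards [Iio_mem_nhds hx] with y hy
      rw [abs_of_neg hy]; ring
    have h2 : HasDerivAt (fun y : ℝ => -(y * y)) (2 * |x|) x := by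
      have := ((hasDerivAt_id x).mul (hasDerivAt_id x)).neg
      exact this.congr_deriv (by rw [abs_of_neg hx]; simp only [id, one_mul, mul_one]; ring)
    exact h2.congr_of_eventuallyEq h
  · subst hx
    rw [hasDerivAt_iff_tendsto_slope]
    have : ∀ y ∈ ({(0:ℝ)}ᶜ : Set ℝ), |y| = slope (fun y : ℝ => y * |y|) 0 y := by
      intro y hy
      have hy0 : y ≠ 0 := by simpa using hy
      simp only [slope_def_field]
      field_simp
      ring
    have habs : Tendsto (fun y : ℝ => |y|) (nhdsWithin (0:ℝ) {(0:ℝ)}ᶜ) (nhds (2 * |(0:ℝ)|)) := by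
      have := (continuous_abs.tendsto (0:ℝ)).mono_left (nhdsWithin_le_nhds (s := {(0:ℝ)}ᶜ))
      simpa using this
    exact habs.congr' (eventually_nhdsWithin_of_forall this)
  · have h : (fun y : ℝ => y * |y|) =ᶠ[nhds x] fun y => y * y := by
      filter_upwards [Ioi_mem_nhds hx] with y hy
      rw [abs_of_pos hy]
    have h2 : HasDerivAt (fun y : ℝ => y * y) (2 * |x|) x := by
      have := (hasDerivAt_id x).mul (hasDerivAt_id x)
      exact this.congr_deriv (by rw [abs_of_pos hx]; simp only [id, one_mul, mul_one]; ring)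
    exact h2.congr_of_eventuallyEq h

lemma maxsq_eq' (y : ℝ) : (max y 0)^2 = (y^2 + y * |y|)/2 := by
  rcases le_total 0 y with h | h
  · rw [max_eq_left h, abs_of_nonneg h]; ring
  · rw [max_eq_right h, abs_of_nonpos h]; ring

lemma maxcube_eq' (y : ℝ) : (max y 0)^3 = (y^3 + y * (y * |y|))/2 := by
  rcases le_total 0 y with h | h
  · rw [max_eq_left h, abs_of_nonneg h]; ring
  · rw [max_eq_right h, abs_of_nonpos h]; ring

lemma hasDerivAt_maxsq' (x : ℝ) :
    HasDerivAt (fun y : ℝ => (max y 0)^2) (2 * max x 0) x := by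
  have h : HasDerivAt (fun y : ℝ => (y^2 + y * |y|)/2) (((2:ℕ) * x ^ 1 + 2 * |x|)/2) x :=
    ((hasDerivAt_pow 2 x).add (hasDerivAt_mul_abs' x)).div_const 2
  have h2 := h.congr_of_eventuallyEq (Eventually.of_forall maxsq_eq')
  refine h2.congr_deriv ?_
  symm
  rcases le_total 0 x with hx | hx
  · rw [max_eq_left hx, abs_of_nonneg hx]; push_cast; ring
  · rw [max_eq_right hx, abs_of_nonpos hx]; push_cast; ring

lemma hasDerivAt_maxcube' (x : ℝ) :
    HasDerivAt (fun y : ℝ => (max y 0)^3) (3 * (max x 0)^2) x := by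
  have h : HasDerivAt (fun y : ℝ => (y^3 + y * (y * |y|))/2)
      (((3:ℕ) * x ^ 2 + (1 * (x * |x|) + x * (2 * |x|)))/2) x :=
    ((hasDerivAt_pow 3 x).add ((hasDerivAt_id x).mul (hasDerivAt_mul_abs' x))).div_const 2
  have h2 := h.congr_of_eventuallyEq (Eventually.of_forall maxcube_eq')
  refine h2.congr_deriv ?_
  symm
  rcases le_total 0 x with hx | hx
  · rw [max_eq_left hx, abs_of_nonneg hx]; push_cast; ring
  · rw [max_eq_right hx, abs_of_nonpos hx]; push_cast; ring

lemma phi_eq' (u : ℝ) : phi u = (max (1 - u^2) 0)^3 := by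
  unfold phi
  split_ifs with h
  · have h1 : u^2 ≤ 1 := by nlinarith [sq_abs u, abs_nonneg u]
    rw [max_eq_left (by linarith)]; ring
  · push_neg at h
    have h1 : 1 < u^2 := by nlinarith [sq_abs u, abs_nonneg u]
    rw [max_eq_right (by linarith)]; simp

lemma phibar_eq' (ξ c x : ℝ) :
    phibar ξ c x = (x - ξ) * |x - ξ| * (max (1 - ((x - ξ)/c)^2) 0)^3 := by
  rw [phibar, phi_eq']

/-- The first derivative of `phibar`. -/
noncomputable def D1 (ξ c x : ℝ) : ℝ :=
  2 * |x - ξ| * (max (1 - ((x - ξ)/c)^2) 0)^3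
  + (x - ξ) * |x - ξ| * (3 * (max (1 - ((x - ξ)/c)^2) 0)^2 * ((-2 * (x - ξ))/c^2))

lemma hasDerivAt_w' (ξ c x : ℝ) :
    HasDerivAt (fun x => 1 - ((x - ξ)/c)^2) ((-2 * (x - ξ))/c^2) x := by
  have h : HasDerivAt (fun x : ℝ => (x - ξ)/c) (1/c) x :=
    ((hasDerivAt_id x).sub_const ξ).div_const c
  have h2 := ((h.pow 2).const_sub 1)
  have he : -(((2:ℕ):ℝ) * ((x - ξ)/c)^(2-1) * (1/c)) = (-2 * (x - ξ))/c^2 := by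
    have h1 : ((x - ξ)/c)^(2-1) = (x-ξ)/c := pow_one _
    push_cast
    rw [h1]
    rw [sq]
    ring
  rw [he] at h2
  exact h2

lemma hasDerivAt_phibar' (ξ c : ℝ) (x : ℝ) :
    HasDerivAt (phibar ξ c) (D1 ξ c x) x := by
  have hq : HasDerivAt (fun x : ℝ => (x - ξ) * |x - ξ|) (2 * |x - ξ|) x := by
    have := (hasDerivAt_mul_abs' (x - ξ)).comp x ((hasDerivAt_id x).sub_const ξ)
    exact this.congr_deriv (mul_one _)
  have hw := hasDerivAt_w' ξ c x
  have hM3 : HasDerivAt (fun x => (max (1 - ((x - ξ)/c)^2) 0)^3)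
      (3 * (max (1 - ((x - ξ)/c)^2) 0)^2 * ((-2 * (x - ξ))/c^2)) x :=
    (hasDerivAt_maxcube' _).comp x hw
  have h := hq.mul hM3
  have heq : phibar ξ c = fun x => ((x - ξ) * |x - ξ|) * (max (1 - ((x - ξ)/c)^2) 0)^3 :=
    funext fun x => phibar_eq' ξ c x
  rw [heq]
  exact h

/-- The non-sign part of the second derivative of `phibar`. -/
noncomputable def G (ξ c x : ℝ) : ℝ :=
  2 * (max (1 - ((x - ξ)/c)^2) 0)^3
      - 30 * ((x - ξ)/c)^2 * (max (1 - ((x - ξ)/c)^2) 0)^2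
      + 24 * ((x - ξ)/c)^4 * (max (1 - ((x - ξ)/c)^2) 0)

/-- The second derivative of `phibar` away from `ξ`. -/
noncomputable def D2 (ξ c x : ℝ) : ℝ := Real.sign (x - ξ) * G ξ c x

lemma hasDerivAt_D1 (ξ c : ℝ) (hc : c ≠ 0) (x : ℝ) (hx : x ≠ ξ) :
    HasDerivAt (D1 ξ c) (D2 ξ c x) x := by
  have hw := hasDerivAt_w' ξ c x
  have hM3 : HasDerivAt (fun x => (max (1 - ((x - ξ)/c)^2) 0)^3)
      (3 * (max (1 - ((x - ξ)/c)^2) 0)^2 * ((-2 * (x - ξ))/c^2)) x :=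
    (hasDerivAt_maxcube' _).comp x hw
  have hM2 : HasDerivAt (fun x => (max (1 - ((x - ξ)/c)^2) 0)^2)
      (2 * (max (1 - ((x - ξ)/c)^2) 0) * ((-2 * (x - ξ))/c^2)) x :=
    (hasDerivAt_maxsq' _).comp x hw
  have ht : HasDerivAt (fun x : ℝ => x - ξ) 1 x := (hasDerivAt_id x).sub_const ξ
  have hh : HasDerivAt (fun x : ℝ => (-2 * (x - ξ))/c^2) ((-2 * 1)/c^2) x :=
    (ht.const_mul (-2)).div_const (c^2)
  rcases hx.lt_or_gt with hxl | hxl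
  · have hmem : Set.Iio ξ ∈ nhds x := Iio_mem_nhds hxl
    have hfeq : D1 ξ c =ᶠ[nhds x] fun x =>
        2 * (-(x - ξ)) * (max (1 - ((x - ξ)/c)^2) 0)^3
        + ((x - ξ) * (-(x - ξ))) * (3 * (max (1 - ((x - ξ)/c)^2) 0)^2 * ((-2 * (x - ξ))/c^2)) := by
      filter_upwards [hmem] with y hy
      simp only [D1]; rw [abs_of_neg (sub_neg.2 hy)]
    have h1 : HasDerivAt (fun x : ℝ =>
        2 * (-(x - ξ)) * (max (1 - ((x - ξ)/c)^2) 0)^3) _ x :=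
      ((ht.neg.const_mul 2).mul hM3)
    have h2 : HasDerivAt (fun x : ℝ =>
        ((x - ξ) * (-(x - ξ))) * (3 * (max (1 - ((x - ξ)/c)^2) 0)^2 * ((-2 * (x - ξ))/c^2))) _ x :=
      ((ht.mul ht.neg).mul ((hM2.const_mul 3).mul hh))
    have h := (h1.add h2).congr_of_eventuallyEq hfeq
    refine h.congr_deriv ?_
    symm
    simp only [D2, G, Pi.mul_apply, Pi.neg_apply]; rw [Real.sign_of_neg (sub_neg.2 hxl)]
    field_simp
    ring
  · have hmem : Set.Ioi ξ ∈ nhds x := Ioi_mem_nhds hxl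
    have hfeq : D1 ξ c =ᶠ[nhds x] fun x =>
        2 * (x - ξ) * (max (1 - ((x - ξ)/c)^2) 0)^3
        + ((x - ξ) * (x - ξ)) * (3 * (max (1 - ((x - ξ)/c)^2) 0)^2 * ((-2 * (x - ξ))/c^2)) := by
      filter_upwards [hmem] with y hy
      simp only [D1]; rw [abs_of_pos (sub_pos.2 hy)]
    have h1 : HasDerivAt (fun x : ℝ =>
        2 * (x - ξ) * (max (1 - ((x - ξ)/c)^2) 0)^3) _ x :=
      ((ht.const_mul 2).mul hM3)
    have h2 : HasDerivAt (fun x : ℝ =>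
        ((x - ξ) * (x - ξ)) * (3 * (max (1 - ((x - ξ)/c)^2) 0)^2 * ((-2 * (x - ξ))/c^2))) _ x :=
      ((ht.mul ht).mul ((hM2.const_mul 3).mul hh))
    have h := (h1.add h2).congr_of_eventuallyEq hfeq
    refine h.congr_deriv ?_
    symm
    simp only [D2, G, Pi.mul_apply]; rw [Real.sign_of_pos (sub_pos.2 hxl)]
    field_simp
    ring

lemma G_cont (ξ c : ℝ) : Continuous (G ξ c) := by
  unfold G
  fun_prop

lemma G_at_xi (ξ c : ℝ) : G ξ c ξ = 2 := by
  simp [G]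

lemma G_bound (ξ c x : ℝ) : |G ξ c x| ≤ 50 := by
  unfold G
  set u : ℝ := (x - ξ)/c with hu
  have hs : 0 ≤ u^2 := sq_nonneg u
  rcases le_or_gt (1 - u^2) 0 with h | h
  · rw [max_eq_right h]
    simp
  · rw [max_eq_left h.le]
    rw [abs_le]
    constructor <;> nlinarith [sq_nonneg (u^2), sq_nonneg (1 - u^2), sq_nonneg (u^2*(1-u^2))]

lemma G_zero (ξ c x : ℝ) (hc : 0 < c) (h : c < |x - ξ|) : G ξ c x = 0 := by
  unfold G
  have h1 : 1 < ((x - ξ)/c)^2 := by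
    have : 1 < |x - ξ|/c := (one_lt_div hc).2 h
    calc (1:ℝ) = 1^2 := by norm_num
    _ < (|x - ξ|/c)^2 := by nlinarith
    _ = ((x - ξ)/c)^2 := by rw [div_pow, div_pow, sq_abs]
  rw [max_eq_right (by linarith)]
  simp

end Aux

/-- `φ̄` is twice differentiable at every `x ≠ ξ`, with `|φ̄''(x)| ≤ 50`
for `x ≠ ξ`, `φ̄''(x) = 0` for `|x-ξ| > c`, and one-sided limits
`φ̄''(ξ+) = 2`, `φ̄''(ξ-) = -2`. -/
theorem phibar_second_derivative_properties (ξ c : ℝ) (hc : 0 < c) :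
    (∀ x : ℝ, x ≠ ξ → DifferentiableAt ℝ (deriv (phibar ξ c)) x) ∧
    (∀ x : ℝ, x ≠ ξ → |deriv (deriv (phibar ξ c)) x| ≤ 50) ∧
    (∀ x : ℝ, c < |x - ξ| → deriv (deriv (phibar ξ c)) x = 0) ∧
    Tendsto (deriv (deriv (phibar ξ c))) (nhdsWithin ξ (Set.Ioi ξ)) (nhds 2) ∧
    Tendsto (deriv (deriv (phibar ξ c))) (nhdsWithin ξ (Set.Iio ξ)) (nhds (-2)) := by
  have hc0 : c ≠ 0 := ne_of_gt hc
  have hD : deriv (phibar ξ c) = D1 ξ c :=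
    funext fun x => (hasDerivAt_phibar' ξ c x).deriv
  have hD2 : ∀ x : ℝ, x ≠ ξ → deriv (deriv (phibar ξ c)) x = D2 ξ c x := by
    intro x hx
    rw [hD]
    exact (hasDerivAt_D1 ξ c hc0 x hx).deriv
  refine ⟨?_, ?_, ?_, ?_, ?_⟩
  · intro x hx
    rw [hD]
    exact (hasDerivAt_D1 ξ c hc0 x hx).differentiableAt
  · intro x hx
    rw [hD2 x hx, D2, abs_mul]
    calc |Real.sign (x - ξ)| * |G ξ c x| ≤ 1 * |G ξ c x| := by
          apply mul_le_mul_of_nonneg_right _ (abs_nonneg _)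
          rcases Real.sign_apply_eq (x - ξ) with h | h | h <;> rw [h] <;> norm_num
    _ = |G ξ c x| := one_mul _
    _ ≤ 50 := G_bound ξ c x
  · intro x hx
    have hxne : x ≠ ξ := by
      intro h; subst h; simp at hx; linarith
    rw [hD2 x hxne, D2, G_zero ξ c x hc hx, mul_zero]
  · have hGt : Tendsto (G ξ c) (nhdsWithin ξ (Set.Ioi ξ)) (nhds 2) := by
      have := ((G_cont ξ c).tendsto ξ).mono_left
        (nhdsWithin_le_nhds (s := Set.Ioi ξ))
      rwa [G_at_xi] at this
    apply hGt.congr'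
    filter_upwards [self_mem_nhdsWithin] with y hy
    have hy' : ξ < y := hy
    rw [hD2 y (ne_of_gt hy'), D2, Real.sign_of_pos (sub_pos.2 hy'), one_mul]
  · have hGt : Tendsto (fun y => -G ξ c y) (nhdsWithin ξ (Set.Iio ξ)) (nhds (-2)) := by
      have := (((G_cont ξ c).neg).tendsto ξ).mono_left
        (nhdsWithin_le_nhds (s := Set.Iio ξ))
      simpa [G_at_xi, Pi.neg_def] using this
    apply hGt.congr'
    filter_upwards [self_mem_nhdsWithin] with y hy
    have hy' : y < ξ := hy
    rw [hD2 y (ne_of_lt hy'), D2, Real.sign_of_neg (sub_neg.2 hy'), neg_one_mul]
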